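/- Let Q be a Dynkin quiver, X and Y exceptional representations with Ext^1_Q(X,Y) = 0, M = X ⊕ Y, e = dim X, d = dim(X ⊕ Y). If N is any representation of dimension vector e that embeds into M, then Ext^1_Q(N,Y) = 0 and dim Hom_Q(N,Y) = ⟨e, d−e⟩ = dim Hom_Q(X,Y), and consequently dim S_{[N]} = dim Hom_Q(N,X) − dim End_Q(N) + dim Hom_Q(X,Y) ≤ dim Hom_Q(X,Y). -/

import Mathlib

/-- A quiver, given by its sets of vertices and arrows with source and target maps. -/
structure QuiverData where
  V : Type
  A : Type
  s : A → V
  t : A → V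

/-- A representation of a quiver over `ℂ`. -/
structure QRep (Q : QuiverData) where
  M : Q.V → Type
  [acg : ∀ i, AddCommGroup (M i)]
  [mod : ∀ i, Module ℂ (M i)]
  f : ∀ a : Q.A, M (Q.s a) →ₗ[ℂ] M (Q.t a)

attribute [instance] QRep.acg QRep.mod

variable {Q : QuiverData}

/-- The space `Hom_Q(X,Y)` of morphisms of representations, as a submodule of the
product of the vertexwise `Hom` spaces. -/
def HomRep (X Y : QRep Q) : Submodule ℂ (∀ i, X.M i →ₗ[ℂ] Y.M i) where
  carrier := {g | ∀ a : Q.A, (g (Q.t a)).comp (X.f a) = (Y.f a).comp (g (Q.s a))}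
  add_mem' := by
    intro a b ha hb ar
    simp only [Pi.add_apply, LinearMap.add_comp, LinearMap.comp_add, ha ar, hb ar]
  zero_mem' := by intro ar; simp
  smul_mem' := by
    intro c a ha ar
    simp only [Pi.smul_apply, LinearMap.smul_comp, LinearMap.comp_smul, ha ar]

/-- Two representations are isomorphic iff there is a vertexwise bijective morphism. -/
def RepIso (X Y : QRep Q) : Prop :=
  ∃ g : HomRep X Y, ∀ i, Function.Bijective (g.1 i)

/-- Direct sum of two representations. -/
def dsumQ (X Y : QRep Q) : QRep Q where
  M i := X.M i × Y.M i
  f a := (X.f a).prodMap (Y.f a)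

/-- A representation `P` is projective if every morphism from `P` to the target of a
vertexwise surjective morphism lifts. -/
def IsProjectiveRep (P : QRep Q) : Prop :=
  ∀ (X Y : QRep Q) (p : HomRep X Y), (∀ i, Function.Surjective (p.1 i)) →
    ∀ h : HomRep P Y, ∃ h' : HomRep P X,
      ∀ i x, p.1 i (h'.1 i x) = h.1 i x

/-- A representation `I` is injective if every morphism to `I` from the source of a
vertexwise injective morphism extends. -/
def IsInjectiveRep (I : QRep Q) : Prop :=
  ∀ (X Y : QRep Q) (ι : HomRep X Y), (∀ i, Function.Injective (ι.1 i)) →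
    ∀ h : HomRep X I, ∃ h' : HomRep Y I,
      ∀ i x, h'.1 i (ι.1 i x) = h.1 i x

/-- A subrepresentation: a family of submodules stable under the structure maps. -/
structure SubRep (X : QRep Q) where
  U : ∀ i, Submodule ℂ (X.M i)
  stable : ∀ a : Q.A, ∀ x ∈ U (Q.s a), X.f a x ∈ U (Q.t a)

/-- A subrepresentation as a representation in its own right. -/
def SubRep.toRep {X : QRep Q} (S : SubRep X) : QRep Q where
  M i := S.U i
  f a := (X.f a).restrict (S.stable a)

/-- The quotient representation `X/S`. -/
def SubRep.quot {X : QRep Q} (S : SubRep X) : QRep Q where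
  M i := X.M i ⧸ S.U i
  f a := Submodule.mapQ (S.U (Q.s a)) (S.U (Q.t a)) (X.f a) (S.stable a)

/-- The map `∏_i Hom(X_i, Y_i) → ∏_a Hom(X_{s(a)}, Y_{t(a)})`,
`φ ↦ (Y_a ∘ φ_{s(a)} − φ_{t(a)} ∘ X_a)_a`, whose cokernel is `Ext¹_Q(X,Y)`
(representations of quivers being hereditary). -/
def deltaMap {Q : QuiverData} (X Y : QRep Q) :
    (∀ i, X.M i →ₗ[ℂ] Y.M i) →ₗ[ℂ] (∀ a : Q.A, X.M (Q.s a) →ₗ[ℂ] Y.M (Q.t a)) where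
  toFun φ := fun a => (Y.f a).comp (φ (Q.s a)) - (φ (Q.t a)).comp (X.f a)
  map_add' := by
    intro φ ψ
    funext a
    simp only [Pi.add_apply, LinearMap.comp_add, LinearMap.add_comp]
    abel
  map_smul' := by
    intro c φ
    funext a
    simp only [Pi.smul_apply, LinearMap.comp_smul, LinearMap.smul_comp,
      RingHom.id_apply, smul_sub]

/-- `dim Ext¹_Q(X,Y)`, computed as the dimension of the cokernel of `deltaMap`. -/
noncomputable def extDim {Q : QuiverData} (X Y : QRep Q) : ℕ :=
  Module.finrank ℂ
    ((∀ a : Q.A, X.M (Q.s a) →ₗ[ℂ] Y.M (Q.t a)) ⧸ LinearMap.range (deltaMap X Y))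

/-- The Euler form of a finite quiver. -/
def eulerQ (Q : QuiverData) [Fintype Q.V] [Fintype Q.A] (d e : Q.V → ℤ) : ℤ :=
  (∑ i : Q.V, d i * e i) - ∑ a : Q.A, d (Q.s a) * e (Q.t a)

section Part0
variable {Q : QuiverData}

theorem homRep_eq_ker (A B : QRep Q) : HomRep A B = LinearMap.ker (deltaMap A B) := by
  ext g
  constructor
  · intro hg
    simp only [LinearMap.mem_ker]
    funext a
    simp only [deltaMap, LinearMap.coe_mk, AddHom.coe_mk, Pi.zero_apply]
    rw [sub_eq_zero, ← hg a]
  · intro hg a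
    have := congrFun (LinearMap.mem_ker.mp hg) a
    simp only [deltaMap, LinearMap.coe_mk, AddHom.coe_mk, Pi.zero_apply] at this
    rw [sub_eq_zero] at this
    rw [this]

theorem euler_eq (A B : QRep Q) [Fintype Q.V] [Fintype Q.A]
    [∀ i, FiniteDimensional ℂ (A.M i)] [∀ i, FiniteDimensional ℂ (B.M i)] :
    (Module.finrank ℂ (HomRep A B) : ℤ) - extDim A B =
      eulerQ Q (fun i => (Module.finrank ℂ (A.M i) : ℤ))
        (fun i => (Module.finrank ℂ (B.M i) : ℤ)) := by
  classical
  have h1 : Module.finrank ℂ (LinearMap.range (deltaMap A B)) +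
      Module.finrank ℂ (LinearMap.ker (deltaMap A B)) =
      Module.finrank ℂ (∀ i, A.M i →ₗ[ℂ] B.M i) :=
    LinearMap.finrank_range_add_finrank_ker (deltaMap A B)
  have h2 : Module.finrank ℂ
        ((∀ a : Q.A, A.M (Q.s a) →ₗ[ℂ] B.M (Q.t a)) ⧸ LinearMap.range (deltaMap A B)) +
      Module.finrank ℂ (LinearMap.range (deltaMap A B)) =
      Module.finrank ℂ (∀ a : Q.A, A.M (Q.s a) →ₗ[ℂ] B.M (Q.t a)) :=
    Submodule.finrank_quotient_add_finrank _
  have hd : Module.finrank ℂ (∀ i, A.M i →ₗ[ℂ] B.M i) =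
      ∑ i : Q.V, Module.finrank ℂ (A.M i) * Module.finrank ℂ (B.M i) := by
    rw [Module.finrank_pi_fintype]
    exact Finset.sum_congr rfl fun i _ => Module.finrank_linearMap ℂ ℂ _ _
  have hc : Module.finrank ℂ (∀ a : Q.A, A.M (Q.s a) →ₗ[ℂ] B.M (Q.t a)) =
      ∑ a : Q.A, Module.finrank ℂ (A.M (Q.s a)) * Module.finrank ℂ (B.M (Q.t a)) := by
    rw [Module.finrank_pi_fintype]
    exact Finset.sum_congr rfl fun i _ => Module.finrank_linearMap ℂ ℂ _ _
  have hk : Module.finrank ℂ (HomRep A B) = Module.finrank ℂ (LinearMap.ker (deltaMap A B)) := by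
    rw [homRep_eq_ker]
  rw [extDim, eulerQ, hk]
  rw [hd] at h1
  rw [hc] at h2
  zify at h1 h2
  push_cast at h1 h2 ⊢
  linarith

theorem extDim_eq_zero_iff (A B : QRep Q) [Fintype Q.V] [Fintype Q.A]
    [∀ i, FiniteDimensional ℂ (A.M i)] [∀ i, FiniteDimensional ℂ (B.M i)] :
    extDim A B = 0 ↔ Function.Surjective (deltaMap A B) := by
  rw [extDim, ← LinearMap.range_eq_top, ← Submodule.Quotient.subsingleton_iff]
  rw [Module.finrank_zero_iff]

end Part0

section Part1
variable {Q : QuiverData}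

theorem delta_dsum_surj (X Y Z : QRep Q)
    (hX : Function.Surjective (deltaMap X Z)) (hY : Function.Surjective (deltaMap Y Z)) :
    Function.Surjective (deltaMap (dsumQ X Y) Z) := by
  intro ξ
  obtain ⟨φX, hφX⟩ := hX (fun a => (ξ a).comp (LinearMap.inl ℂ _ _))
  obtain ⟨φY, hφY⟩ := hY (fun a => (ξ a).comp (LinearMap.inr ℂ _ _))
  refine ⟨fun i => (φX i).comp (LinearMap.fst ℂ _ _) + (φY i).comp (LinearMap.snd ℂ _ _), ?_⟩
  funext a
  have hXa := congrFun hφX a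
  have hYa := congrFun hφY a
  apply LinearMap.ext
  rintro ⟨u, w⟩
  have hu := LinearMap.congr_fun hXa u
  have hw := LinearMap.congr_fun hYa w
  simp only [deltaMap, LinearMap.coe_mk, AddHom.coe_mk, LinearMap.sub_apply,
    LinearMap.comp_apply, LinearMap.add_apply, LinearMap.fst_apply, LinearMap.snd_apply,
    LinearMap.inl_apply, LinearMap.inr_apply, dsumQ, LinearMap.prodMap_apply,
    LinearMap.coe_comp, Function.comp_apply] at hu hw ⊢
  show Z.f a (φX (Q.s a) u + φY (Q.s a) w) - (φX (Q.t a) (X.f a u) + φY (Q.t a) (Y.f a w)) = ξ a (u, w)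
  rw [map_add]
  rw [show (Z.f a) ((φX (Q.s a)) u) + (Z.f a) ((φY (Q.s a)) w) -
      ((φX (Q.t a)) ((X.f a) u) + (φY (Q.t a)) ((Y.f a) w)) =
      ((Z.f a) ((φX (Q.s a)) u) - (φX (Q.t a)) ((X.f a) u)) +
      ((Z.f a) ((φY (Q.s a)) w) - (φY (Q.t a)) ((Y.f a) w)) from by abel]
  rw [hu, hw]
  show ξ a (u, 0) + ξ a (0, w) = ξ a (u, w)
  refine (map_add (ξ a) (u, 0) (0, w)).symm.trans ?_
  congr 1
  show ((u, 0) + (0, w) : X.M (Q.s a) × Y.M (Q.s a)) = (u, w)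
  simp

theorem delta_sub_surj (N M Z : QRep Q) (ι : HomRep N M) (hι : ∀ i, Function.Injective (ι.1 i))
    [∀ i, FiniteDimensional ℂ (N.M i)]
    (hM : Function.Surjective (deltaMap M Z)) :
    Function.Surjective (deltaMap N Z) := by
  intro ξ
  have hret : ∀ i, ∃ r : M.M i →ₗ[ℂ] N.M i, r.comp (ι.1 i) = LinearMap.id := fun i =>
    LinearMap.exists_leftInverse_of_injective (ι.1 i) (LinearMap.ker_eq_bot.mpr (hι i))
  choose r hr using hret
  obtain ⟨φ, hφ⟩ := hM (fun a => (ξ a).comp (r (Q.s a)))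
  refine ⟨fun i => (φ i).comp (ι.1 i), ?_⟩
  funext a
  have ha := congrFun hφ a
  apply LinearMap.ext
  intro v
  have hv := LinearMap.congr_fun ha ((ι.1 (Q.s a)) v)
  have hcomm : (ι.1 (Q.t a)) (N.f a v) = (M.f a) ((ι.1 (Q.s a)) v) := by
    exact LinearMap.congr_fun (ι.2 a) v
  have hrv : (r (Q.s a)) ((ι.1 (Q.s a)) v) = v :=
    LinearMap.congr_fun (hr (Q.s a)) v
  simp only [deltaMap, LinearMap.coe_mk, AddHom.coe_mk, LinearMap.sub_apply,
    LinearMap.comp_apply] at hv ⊢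
  rw [← hcomm] at hv
  rw [hv, hrv]

end Part1

section Part4
variable {Q : QuiverData}

set_option synthInstance.maxHeartbeats 1000000 in
theorem finrank_homRep_dsum [Fintype Q.V] (N X Y : QRep Q)
    [∀ i, FiniteDimensional ℂ (X.M i)] [∀ i, FiniteDimensional ℂ (Y.M i)]
    [∀ i, FiniteDimensional ℂ (N.M i)] :
    Module.finrank ℂ (HomRep N (dsumQ X Y)) =
      Module.finrank ℂ (HomRep N X) + Module.finrank ℂ (HomRep N Y) := by
  haveI fx : FiniteDimensional ℂ (∀ i, N.M i →ₗ[ℂ] X.M i) := by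
    haveI : ∀ i, Module.Finite ℂ (N.M i →ₗ[ℂ] X.M i) := fun i => Module.Finite.linearMap _ _ _ _
    exact Module.Finite.pi
  haveI fy : FiniteDimensional ℂ (∀ i, N.M i →ₗ[ℂ] Y.M i) := by
    haveI : ∀ i, Module.Finite ℂ (N.M i →ₗ[ℂ] Y.M i) := fun i => Module.Finite.linearMap _ _ _ _
    exact Module.Finite.pi
  haveI : FiniteDimensional ℂ (HomRep N X) := FiniteDimensional.finiteDimensional_submodule _
  haveI : FiniteDimensional ℂ (HomRep N Y) := FiniteDimensional.finiteDimensional_submodule _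
  have memX : ∀ g : HomRep N (dsumQ X Y),
      (fun i => (LinearMap.fst ℂ (X.M i) (Y.M i)).comp (g.1 i)) ∈ HomRep N X := by
    intro g a
    apply LinearMap.ext
    intro v
    have := LinearMap.congr_fun (g.2 a) v
    simp only [dsumQ, LinearMap.comp_apply, LinearMap.prodMap_apply, LinearMap.fst_apply] at this ⊢
    exact congrArg Prod.fst this
  have memY : ∀ g : HomRep N (dsumQ X Y),
      (fun i => (LinearMap.snd ℂ (X.M i) (Y.M i)).comp (g.1 i)) ∈ HomRep N Y := by
    intro g a
    apply LinearMap.ext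
    intro v
    have := LinearMap.congr_fun (g.2 a) v
    simp only [dsumQ, LinearMap.comp_apply, LinearMap.prodMap_apply, LinearMap.snd_apply] at this ⊢
    exact congrArg Prod.snd this
  have memP : ∀ (g₁ : HomRep N X) (g₂ : HomRep N Y),
      (fun i => LinearMap.prod (g₁.1 i) (g₂.1 i)) ∈ HomRep N (dsumQ X Y) := by
    intro g₁ g₂ a
    apply LinearMap.ext
    intro v
    have h1 := LinearMap.congr_fun (g₁.2 a) v
    have h2 := LinearMap.congr_fun (g₂.2 a) v
    simp only [dsumQ, LinearMap.comp_apply, LinearMap.prodMap_apply, LinearMap.prod_apply,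
      Function.prod] at h1 h2 ⊢
    exact Prod.ext h1 h2
  let e : (HomRep N (dsumQ X Y)) ≃ₗ[ℂ] (HomRep N X × HomRep N Y) :=
    { toFun := fun g => (⟨_, memX g⟩, ⟨_, memY g⟩)
      invFun := fun p => ⟨_, memP p.1 p.2⟩
      map_add' := by intro a b; rfl
      map_smul' := by intro c a; rfl
      left_inv := by
        intro g
        apply Subtype.ext
        funext i
        apply LinearMap.ext
        intro v
        rfl
      right_inv := by
        intro p
        apply Prod.ext <;> (apply Subtype.ext; funext i; apply LinearMap.ext; intro v; rfl) }
  rw [e.finrank_eq, Module.finrank_prod]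

end Part4

section Semicont
open Module Polynomial

theorem semicont_ker {E H K : Type}
    [NormedAddCommGroup E] [NormedSpace ℂ E]
    [AddCommGroup H] [Module ℂ H] [FiniteDimensional ℂ H]
    [AddCommGroup K] [Module ℂ K] [FiniteDimensional ℂ K]
    (T : E →ₗ[ℂ] (H →ₗ[ℂ] K)) (Φ₀ : H →ₗ[ℂ] K) (x n : E)
    {W : Set E} (hW : W ∈ nhds x) (c : ℕ)
    (hc : ∀ v ∈ W, finrank ℂ (LinearMap.ker (Φ₀ + T v)) = c) :
    c ≤ finrank ℂ (LinearMap.ker (Φ₀ + T n)) := by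
  classical
  by_contra hlt
  push_neg at hlt
  set Φn := Φ₀ + T n with hΦn
  obtain ⟨S, hS⟩ := Submodule.exists_isCompl (LinearMap.ker Φn)
  obtain ⟨R', hR'⟩ := Submodule.exists_isCompl (LinearMap.range Φn)
  have hrankS : finrank ℂ S + finrank ℂ (LinearMap.ker Φn) = finrank ℂ H := by
    rw [add_comm]
    exact Submodule.finrank_add_eq_of_isCompl hS
  have hrankR : finrank ℂ (LinearMap.range Φn) = finrank ℂ S := by
    have := LinearMap.finrank_range_add_finrank_ker Φn
    omega
  let ε : (LinearMap.range Φn) ≃ₗ[ℂ] S := LinearEquiv.ofFinrankEq _ _ hrankR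
  let π : K →ₗ[ℂ] (LinearMap.range Φn) := (LinearMap.range Φn).linearProjOfIsCompl R' hR'
  -- the affine family of endomorphisms of S
  let D : E → (S →ₗ[ℂ] S) := fun v =>
    ε.toLinearMap ∘ₗ π ∘ₗ (T v) ∘ₗ S.subtype
  let χ : E → (S →ₗ[ℂ] S) := fun v =>
    ε.toLinearMap ∘ₗ π ∘ₗ (Φ₀ + T v) ∘ₗ S.subtype
  have hχ : ∀ v, χ v = χ x + D (v - x) := by
    intro v
    simp only [χ, D, map_sub]
    ext s
    simp [LinearMap.add_apply, LinearMap.sub_apply, map_add, map_sub]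
  -- injectivity of χ v forces large kernel bound
  have key : ∀ v, Function.Injective (χ v) → Function.Injective ((Φ₀ + T v).comp S.subtype) := by
    intro v hv s hs' hss
    apply hv
    simp only [χ, LinearMap.comp_apply]
    have : (Φ₀ + T v) (S.subtype s) = (Φ₀ + T v) (S.subtype hs') := hss
    rw [this]
  have inj_bound : ∀ v, Function.Injective ((Φ₀ + T v).comp S.subtype) →
      finrank ℂ S + finrank ℂ (LinearMap.ker (Φ₀ + T v)) ≤ finrank ℂ H := by
    intro v hv
    have hdisj : S ⊓ LinearMap.ker (Φ₀ + T v) = ⊥ := by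
      rw [Submodule.eq_bot_iff]
      rintro y ⟨hyS, hyk⟩
      have : ((Φ₀ + T v).comp S.subtype) ⟨y, hyS⟩ = ((Φ₀ + T v).comp S.subtype) 0 := by
        simp only [LinearMap.comp_apply, Submodule.coe_subtype, map_zero]
        exact hyk
      have := hv this
      simpa using congrArg Subtype.val this
    have := Submodule.finrank_sup_add_finrank_inf_eq S (LinearMap.ker (Φ₀ + T v))
    rw [hdisj] at this
    simp only [finrank_bot, add_zero] at this
    rw [← this]
    exact Submodule.finrank_le _
  -- χ n is injective
  have hχn_inj : Function.Injective (χ n) := by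
    intro s s' hss
    simp only [χ, LinearMap.comp_apply] at hss
    have h1 : ∀ y : S, π (Φn (S.subtype y)) = ⟨Φn (S.subtype y), LinearMap.mem_range_self _ _⟩ :=
      fun y => Submodule.linearProjOfIsCompl_apply_left hR' ⟨Φn (S.subtype y), LinearMap.mem_range_self _ _⟩
    rw [h1 s, h1 s'] at hss
    have h2 := ε.injective hss
    have h3 : Φn ((s : H) - (s' : H)) = 0 := by
      have := congrArg Subtype.val h2
      simp only [map_sub]
      simpa [sub_eq_zero] using this
    have h4 : ((s : H) - (s' : H)) ∈ S ⊓ LinearMap.ker Φn := by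
      constructor
      · exact sub_mem s.2 s'.2
      · exact h3
    rw [inf_comm, hS.inf_eq_bot] at h4
    have : (s : H) = (s' : H) := by
      have := (Submodule.mem_bot ℂ).mp h4
      rwa [sub_eq_zero] at this
    exact Subtype.ext this
  -- determinant polynomial along the segment from x to n
  set d := n - x with hd
  let bS := Module.finBasis ℂ S
  let MA := LinearMap.toMatrix bS bS (χ x)
  let MB := LinearMap.toMatrix bS bS (D d)
  let p : Polynomial ℂ := (MA.map Polynomial.C + (Polynomial.X : Polynomial ℂ) • MB.map Polynomial.C).det
  have hp_eval : ∀ t : ℂ, p.eval t = LinearMap.det (χ x + t • D d) := by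
    intro t
    have h1 : (MA.map Polynomial.C + (Polynomial.X : Polynomial ℂ) • MB.map Polynomial.C).map
        (Polynomial.evalRingHom t) = MA + t • MB := by
      ext i j
      simp [Matrix.map_apply, Matrix.add_apply, Matrix.smul_apply]
      ring
    have h2 := (Polynomial.evalRingHom t).map_det
      (MA.map Polynomial.C + (Polynomial.X : Polynomial ℂ) • MB.map Polynomial.C)
    simp only [RingHom.mapMatrix_apply] at h2
    rw [h1] at h2
    have h3 : LinearMap.toMatrix bS bS (χ x + t • D d) = MA + t • MB := by
      simp [MA, MB, map_add, map_smul]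
    rw [← LinearMap.det_toMatrix bS, h3, ← h2]
    rfl
  -- p vanishes on a neighborhood of 0
  have hT0 : {t : ℂ | x + t • d ∈ W} ∈ nhds (0 : ℂ) := by
    have hcont : Continuous (fun t : ℂ => x + t • d) :=
      continuous_const.add (continuous_id.smul continuous_const)
    have h0 : x + (0 : ℂ) • d = x := by simp
    apply hcont.continuousAt.preimage_mem_nhds
    show W ∈ nhds (x + (0 : ℂ) • d)
    rwa [h0]
  have hroots : ∀ t ∈ {t : ℂ | x + t • d ∈ W}, p.eval t = 0 := by
    intro t ht
    rw [hp_eval t]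
    by_contra hne
    -- nonzero det implies injective
    have hinj : Function.Injective (χ x + t • D d) := by
      have hdet : LinearMap.det (χ x + t • D d) ≠ 0 := hne
      have hdet2 : ((LinearMap.toMatrixAlgEquiv bS) (χ x + t • D d)).det ≠ 0 := by
        rwa [← LinearMap.det_toMatrix bS] at hdet
      have hu : IsUnit ((LinearMap.toMatrixAlgEquiv bS) (χ x + t • D d)) :=
        (Matrix.isUnit_iff_isUnit_det _).mpr (Ne.isUnit hdet2)
      have hu2 : IsUnit (χ x + t • D d) := by
        have := hu.map (LinearMap.toMatrixAlgEquiv bS).symm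
        rwa [AlgEquiv.symm_apply_apply] at this
      rw [← LinearMap.ker_eq_bot]
      exact (LinearMap.isUnit_iff_ker_eq_bot _).mp hu2
    have hinj' : Function.Injective (χ (x + t • d)) := by
      rw [hχ (x + t • d)]
      have hxx : x + t • d - x = t • d := by abel
      rw [hxx]
      have hD : D (t • d) = t • D d := by
        apply LinearMap.ext
        intro s
        simp [D]
      rw [hD]
      exact hinj
    have hinj2 := key _ hinj'
    have hb := inj_bound _ hinj2
    rw [hc _ ht] at hb
    omega
  have hinf : Set.Infinite {t : ℂ | p.IsRoot t} := by
    apply Set.Infinite.mono (fun t ht => hroots t ht)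
    exact infinite_of_mem_nhds (0 : ℂ) hT0
  have hp0 : p = 0 := Polynomial.eq_zero_of_infinite_isRoot p hinf
  have : LinearMap.det (χ n) = 0 := by
    have := hp_eval 1
    rw [hp0] at this
    simp only [Polynomial.eval_zero] at this
    rw [hχ n, ← hd, show χ x + D d = χ x + (1 : ℂ) • D d by rw [one_smul], ← this]
  -- but χ n is injective hence has nonzero det
  have hbij : Function.Bijective (χ n) :=
    ⟨hχn_inj, (LinearMap.injective_iff_surjective).mp hχn_inj⟩
  have hunit : IsUnit (LinearMap.det (χ n)) := by
    have h := LinearEquiv.isUnit_det' (LinearEquiv.ofBijective (χ n) hbij)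
    have hcoe : ((LinearEquiv.ofBijective (χ n) hbij : S ≃ₗ[ℂ] S) : S →ₗ[ℂ] S) = χ n := rfl
    rwa [hcoe] at h
  exact hunit.ne_zero this
end Semicont

section Orbit
open Module

attribute [local instance] Matrix.linftyOpNormedAddCommGroup Matrix.linftyOpNormedSpace
attribute [local instance] Matrix.linftyOpNormedRing Matrix.linftyOpNormedAlgebra

variable {I A : Type} [Fintype I] [Fintype A]

theorem orbit_nhds (st tt : A → I) (m : I → ℕ)
    (x : ∀ a, Matrix (Fin (m (tt a))) (Fin (m (st a))) ℂ)
    (hsurj : Function.Surjective (fun (φ : ∀ i, Matrix (Fin (m i)) (Fin (m i)) ℂ) =>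
      (fun a => φ (tt a) * x a - x a * φ (st a) :
        ∀ a, Matrix (Fin (m (tt a))) (Fin (m (st a))) ℂ))) :
    ∃ W ∈ nhds x, ∀ v ∈ W, ∃ g : ∀ i, Matrix (Fin (m i)) (Fin (m i)) ℂ,
      (∀ i, IsUnit (g i)) ∧ ∀ a, v a * g (st a) = g (tt a) * x a := by
  classical
  -- the linear map candidate derivative
  let L0 : (∀ i, Matrix (Fin (m i)) (Fin (m i)) ℂ) →ₗ[ℂ]
      (∀ a, Matrix (Fin (m (tt a))) (Fin (m (st a))) ℂ) :=
    { toFun := fun φ => fun a => φ (tt a) * x a - x a * φ (st a)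
      map_add' := by
        intro φ ψ
        funext a
        simp only [Pi.add_apply, Matrix.add_mul, Matrix.mul_add]
        abel
      map_smul' := by
        intro c φ
        funext a
        simp only [Pi.smul_apply, Matrix.smul_mul, Matrix.mul_smul, RingHom.id_apply, smul_sub] }
  let L := L0.toContinuousLinearMap
  -- the conjugation map
  let θ : (∀ i, Matrix (Fin (m i)) (Fin (m i)) ℂ) →
      (∀ a, Matrix (Fin (m (tt a))) (Fin (m (st a))) ℂ) :=
    fun h => fun a => (1 + h (tt a)) * x a * Ring.inverse (1 + h (st a))
  have hθ : HasStrictFDerivAt θ L 0 := by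
    apply hasStrictFDerivAt_pi''
    intro a
    -- bilinear multiplication map
    let mk2 : Matrix (Fin (m (tt a))) (Fin (m (st a))) ℂ →ₗ[ℂ]
        Matrix (Fin (m (st a))) (Fin (m (st a))) ℂ →ₗ[ℂ]
        Matrix (Fin (m (tt a))) (Fin (m (st a))) ℂ :=
      LinearMap.mk₂ ℂ (fun z w => z * w)
        (fun z z' w => Matrix.add_mul z z' w)
        (fun c z w => Matrix.smul_mul c z w)
        (fun z w w' => Matrix.mul_add z w w')
        (fun c z w => Matrix.mul_smul z c w)
    let clm : Matrix (Fin (m (tt a))) (Fin (m (st a))) ℂ →L[ℂ]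
        Matrix (Fin (m (st a))) (Fin (m (st a))) ℂ →L[ℂ]
        Matrix (Fin (m (tt a))) (Fin (m (st a))) ℂ :=
      (LinearMap.toContinuousLinearMap.toLinearMap ∘ₗ mk2).toContinuousLinearMap
    have hB : IsBoundedBilinearMap ℂ
        (fun p : (Matrix (Fin (m (tt a))) (Fin (m (st a))) ℂ) ×
          (Matrix (Fin (m (st a))) (Fin (m (st a))) ℂ) => p.1 * p.2) :=
      clm.isBoundedBilinearMap
    -- f1 : h ↦ (1 + h (tt a)) * x a
    let C1 : (∀ i, Matrix (Fin (m i)) (Fin (m i)) ℂ) →L[ℂ]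
        Matrix (Fin (m (tt a))) (Fin (m (st a))) ℂ :=
      ({ toFun := fun φ => φ (tt a) * x a
         map_add' := by intro u v; simp [Matrix.add_mul]
         map_smul' := by intro c u; simp [Matrix.smul_mul] } :
        (∀ i, Matrix (Fin (m i)) (Fin (m i)) ℂ) →ₗ[ℂ] _).toContinuousLinearMap
    have hf1 : HasStrictFDerivAt
        (fun h : (∀ i, Matrix (Fin (m i)) (Fin (m i)) ℂ) => (1 + h (tt a)) * x a) C1 0 := by
      have h1 := (C1.hasStrictFDerivAt (x := 0)).add_const (x a)
      apply h1.congr_of_eventuallyEq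
      apply Filter.Eventually.of_forall
      intro h
      show C1 h + x a = (1 + h (tt a)) * x a
      simp only [Matrix.add_mul, Matrix.one_mul]
      have : C1 h = h (tt a) * x a := rfl
      rw [this]
      abel
    -- f3 : h ↦ Ring.inverse (1 + h (st a))
    let C3 : (∀ i, Matrix (Fin (m i)) (Fin (m i)) ℂ) →L[ℂ]
        Matrix (Fin (m (st a))) (Fin (m (st a))) ℂ :=
      ({ toFun := fun φ => -φ (st a)
         map_add' := by intro u v; simp; abel
         map_smul' := by intro c u; simp } :
        (∀ i, Matrix (Fin (m i)) (Fin (m i)) ℂ) →ₗ[ℂ] _).toContinuousLinearMap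
    let P : (∀ i, Matrix (Fin (m i)) (Fin (m i)) ℂ) →L[ℂ]
        Matrix (Fin (m (st a))) (Fin (m (st a))) ℂ := ContinuousLinearMap.proj (st a)
    have hg0 : HasStrictFDerivAt
        (fun h : (∀ i, Matrix (Fin (m i)) (Fin (m i)) ℂ) => 1 + h (st a))
        P 0 := P.hasStrictFDerivAt.const_add 1
    have hinv : HasStrictFDerivAt Ring.inverse
        (-(ContinuousLinearMap.mulLeftRight ℂ _
           (((1 : (Matrix (Fin (m (st a))) (Fin (m (st a))) ℂ)ˣ)⁻¹ :
             (Matrix (Fin (m (st a))) (Fin (m (st a))) ℂ)ˣ) :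
             Matrix (Fin (m (st a))) (Fin (m (st a))) ℂ)
           (((1 : (Matrix (Fin (m (st a))) (Fin (m (st a))) ℂ)ˣ)⁻¹ :
             (Matrix (Fin (m (st a))) (Fin (m (st a))) ℂ)ˣ) :
             Matrix (Fin (m (st a))) (Fin (m (st a))) ℂ)))
        ((fun h : (∀ i, Matrix (Fin (m i)) (Fin (m i)) ℂ) => 1 + h (st a)) 0) := by
      have := hasStrictFDerivAt_ringInverse
        (𝕜 := ℂ) (1 : (Matrix (Fin (m (st a))) (Fin (m (st a))) ℂ)ˣ)
      convert this using 2
      exacts [rfl, rfl, by simp]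
    have hf3 : HasStrictFDerivAt
        (fun h : (∀ i, Matrix (Fin (m i)) (Fin (m i)) ℂ) => Ring.inverse (1 + h (st a))) C3 0 := by
      have hcomp := hinv.comp (0 : (∀ i, Matrix (Fin (m i)) (Fin (m i)) ℂ)) hg0
      have : ((-(ContinuousLinearMap.mulLeftRight ℂ _
           (((1 : (Matrix (Fin (m (st a))) (Fin (m (st a))) ℂ)ˣ)⁻¹ :
             (Matrix (Fin (m (st a))) (Fin (m (st a))) ℂ)ˣ) :
             Matrix (Fin (m (st a))) (Fin (m (st a))) ℂ)
           (((1 : (Matrix (Fin (m (st a))) (Fin (m (st a))) ℂ)ˣ)⁻¹ :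
             (Matrix (Fin (m (st a))) (Fin (m (st a))) ℂ)ˣ) :
             Matrix (Fin (m (st a))) (Fin (m (st a))) ℂ))).comp P)
           = C3 := by
        apply ContinuousLinearMap.ext
        intro h
        simp [ContinuousLinearMap.mulLeftRight_apply, C3]
        show -(1 * h (st a) * 1) = -h (st a)
        simp
      rw [← this]; exact hcomp
    have hcomp := (hB.hasStrictFDerivAt
        ((fun h : (∀ i, Matrix (Fin (m i)) (Fin (m i)) ℂ) => (1 + h (tt a)) * x a) 0,
         (fun h : (∀ i, Matrix (Fin (m i)) (Fin (m i)) ℂ) => Ring.inverse (1 + h (st a))) 0)).comp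
        (0 : (∀ i, Matrix (Fin (m i)) (Fin (m i)) ℂ)) (hf1.prodMk hf3)
    have heq : (fun h : (∀ i, Matrix (Fin (m i)) (Fin (m i)) ℂ) =>
        (fun p : (Matrix (Fin (m (tt a))) (Fin (m (st a))) ℂ) ×
          (Matrix (Fin (m (st a))) (Fin (m (st a))) ℂ) => p.1 * p.2)
        ((1 + h (tt a)) * x a, Ring.inverse (1 + h (st a)))) = fun h => θ h a := rfl
    rw [heq] at hcomp
    have hder : ((hB.deriv
        ((fun h : (∀ i, Matrix (Fin (m i)) (Fin (m i)) ℂ) => (1 + h (tt a)) * x a) 0,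
         (fun h : (∀ i, Matrix (Fin (m i)) (Fin (m i)) ℂ) => Ring.inverse (1 + h (st a))) 0)).comp
        (C1.prod C3)) = (ContinuousLinearMap.proj a).comp L := by
      apply ContinuousLinearMap.ext
      intro h
      simp only [ContinuousLinearMap.comp_apply, ContinuousLinearMap.prod_apply,
        IsBoundedBilinearMap.deriv_apply, ContinuousLinearMap.proj_apply]
      show (1 + (0 : ∀ i, Matrix (Fin (m i)) (Fin (m i)) ℂ) (tt a)) * x a * C3 h
          + C1 h * Ring.inverse (1 + (0 : ∀ i, Matrix (Fin (m i)) (Fin (m i)) ℂ) (st a))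
          = L0 h a
      have e1 : C1 h = h (tt a) * x a := rfl
      have e2 : C3 h = -h (st a) := rfl
      have e3 : L0 h a = h (tt a) * x a - x a * h (st a) := rfl
      rw [e1, e2, e3]
      simp [Ring.inverse_one]
      abel
    exact hcomp.congr_fderiv hder
  -- surjectivity of the derivative
  have hrange : L.range = ⊤ := by
    rw [LinearMap.range_eq_top]
    exact hsurj
  have hmap := hθ.map_nhds_eq_of_surj hrange
  have hθ0 : θ 0 = x := by
    funext a
    show (1 + 0) * x a * Ring.inverse (1 + 0) = x a
    simp [Ring.inverse_one]
  -- the neighborhood of h = 0 consisting of small h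
  have hU : {h : ∀ i, Matrix (Fin (m i)) (Fin (m i)) ℂ | ∀ i, ‖h i‖ < 1} ∈ nhds 0 := by
    apply Filter.mem_of_superset (Metric.ball_mem_nhds (0 : ∀ i, Matrix (Fin (m i)) (Fin (m i)) ℂ)
      one_pos)
    intro h hh i
    have := norm_le_pi_norm h i
    have hb : ‖h‖ < 1 := by simpa [dist_zero_right] using hh
    linarith
  refine ⟨θ '' {h | ∀ i, ‖h i‖ < 1}, ?_, ?_⟩
  · have := Filter.image_mem_map (m := θ) hU
    rw [← hθ0]
    exact (congrArg (fun F => θ '' {h | ∀ i, ‖h i‖ < 1} ∈ F) hmap).mp this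
  · rintro v ⟨h, hh, rfl⟩
    refine ⟨fun i => 1 + h i, fun i => ?_, fun a => ?_⟩
    · have : IsUnit (1 - (-h i)) := (Units.oneSub (-h i) (by simpa using hh i)).isUnit
      simpa [sub_neg_eq_add] using this
    · show (1 + h (tt a)) * x a * Ring.inverse (1 + h (st a)) * (1 + h (st a))
        = (1 + h (tt a)) * x a
      have hun : IsUnit (1 + h (st a)) := by
        have : IsUnit (1 - (-h (st a))) := (Units.oneSub (-h (st a)) (by simpa using hh (st a))).isUnit
        simpa [sub_neg_eq_add] using this
      rw [Matrix.mul_assoc, Ring.inverse_mul_cancel _ hun, Matrix.mul_one]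
end Orbit

section Part5
open Module

attribute [local instance] Matrix.linftyOpNormedAddCommGroup Matrix.linftyOpNormedSpace
attribute [local instance] Matrix.linftyOpNormedRing Matrix.linftyOpNormedAlgebra

theorem homNX_le_endN {Q : QuiverData} [Fintype Q.V] [Fintype Q.A] (X N : QRep Q)
    [∀ i, FiniteDimensional ℂ (X.M i)] [∀ i, FiniteDimensional ℂ (N.M i)]
    (hX : extDim X X = 0)
    (hdim : ∀ i, Module.finrank ℂ (N.M i) = Module.finrank ℂ (X.M i)) :
    Module.finrank ℂ (HomRep N X) ≤ Module.finrank ℂ (HomRep N N) := by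
  classical
  set m : Q.V → ℕ := fun i => finrank ℂ (X.M i) with hm
  let bX : ∀ i, Basis (Fin (m i)) ℂ (X.M i) := fun i => Module.finBasis ℂ (X.M i)
  let bN : ∀ i, Basis (Fin (m i)) ℂ (N.M i) := fun i =>
    (Module.finBasis ℂ (N.M i)).reindex (finCongr (hdim i))
  let xm : ∀ a, Matrix (Fin (m (Q.t a))) (Fin (m (Q.s a))) ℂ := fun a =>
    LinearMap.toMatrix (bX (Q.s a)) (bX (Q.t a)) (X.f a)
  let nm : ∀ a, Matrix (Fin (m (Q.t a))) (Fin (m (Q.s a))) ℂ := fun a =>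
    LinearMap.toMatrix (bN (Q.s a)) (bN (Q.t a)) (N.f a)
  -- the affine family
  let T : (∀ a, Matrix (Fin (m (Q.t a))) (Fin (m (Q.s a))) ℂ) →ₗ[ℂ]
      ((∀ i, Matrix (Fin (m i)) (Fin (m i)) ℂ) →ₗ[ℂ]
       (∀ a, Matrix (Fin (m (Q.t a))) (Fin (m (Q.s a))) ℂ)) :=
    { toFun := fun v =>
      { toFun := fun φ => fun a => v a * φ (Q.s a)
        map_add' := by intro φ ψ; funext a; simp [Matrix.mul_add]
        map_smul' := by intro c φ; funext a; simp [Matrix.mul_smul] }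
      map_add' := by
        intro v w; apply LinearMap.ext; intro φ; funext a
        simp [Matrix.add_mul]
      map_smul' := by
        intro c v; apply LinearMap.ext; intro φ; funext a
        simp [Matrix.smul_mul] }
  let Φ₀ : (∀ i, Matrix (Fin (m i)) (Fin (m i)) ℂ) →ₗ[ℂ]
      (∀ a, Matrix (Fin (m (Q.t a))) (Fin (m (Q.s a))) ℂ) :=
    { toFun := fun φ => fun a => -(φ (Q.t a) * nm a)
      map_add' := by intro φ ψ; funext a; simp [Matrix.add_mul]; abel
      map_smul' := by intro c φ; funext a; simp [Matrix.smul_mul] }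
  -- kernel membership criterion
  have hker : ∀ (v : ∀ a, Matrix (Fin (m (Q.t a))) (Fin (m (Q.s a))) ℂ)
      (φ : ∀ i, Matrix (Fin (m i)) (Fin (m i)) ℂ),
      φ ∈ LinearMap.ker (Φ₀ + T v) ↔ ∀ a, v a * φ (Q.s a) = φ (Q.t a) * nm a := by
    intro v φ
    rw [LinearMap.mem_ker]
    constructor
    · intro h a
      have := congrFun h a
      simp only [LinearMap.add_apply, Pi.add_apply, Pi.zero_apply] at this
      have h2 : -(φ (Q.t a) * nm a) + v a * φ (Q.s a) = 0 := this
      rw [neg_add_eq_zero] at h2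
      exact h2.symm
    · intro h
      funext a
      show -(φ (Q.t a) * nm a) + v a * φ (Q.s a) = 0
      rw [h a]
      abel
  -- transport of HomRep N X
  let ΨNX : (∀ i, N.M i →ₗ[ℂ] X.M i) ≃ₗ[ℂ] (∀ i, Matrix (Fin (m i)) (Fin (m i)) ℂ) :=
    LinearEquiv.piCongrRight (fun i => LinearMap.toMatrix (bN i) (bX i))
  have hmapNX : Submodule.map (ΨNX : (∀ i, N.M i →ₗ[ℂ] X.M i) →ₗ[ℂ] _)
      (HomRep N X) = LinearMap.ker (Φ₀ + T xm) := by
    ext y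
    rw [Submodule.mem_map_equiv, hker]
    constructor
    · intro hmem a
      have hc := hmem a
      have := congrArg (LinearMap.toMatrix (bN (Q.s a)) (bX (Q.t a))) hc
      rw [LinearMap.toMatrix_comp _ (bN (Q.t a)) _, LinearMap.toMatrix_comp _ (bX (Q.s a)) _] at this
      have hy : ∀ i, LinearMap.toMatrix (bN i) (bX i) (ΨNX.symm y i) = y i := by
        intro i
        have : ΨNX (ΨNX.symm y) = y := ΨNX.apply_symm_apply y
        exact congrFun this i
      rw [hy, hy] at this
      exact this.symm
    · intro hmem a
      have hc := hmem a
      have hy : ∀ i, LinearMap.toMatrix (bN i) (bX i) (ΨNX.symm y i) = y i := by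
        intro i
        have : ΨNX (ΨNX.symm y) = y := ΨNX.apply_symm_apply y
        exact congrFun this i
      apply (LinearMap.toMatrix (bN (Q.s a)) (bX (Q.t a))).injective
      rw [LinearMap.toMatrix_comp _ (bN (Q.t a)) _, LinearMap.toMatrix_comp _ (bX (Q.s a)) _]
      rw [hy, hy]
      exact hc.symm
  -- transport of HomRep N N
  let ΨNN : (∀ i, N.M i →ₗ[ℂ] N.M i) ≃ₗ[ℂ] (∀ i, Matrix (Fin (m i)) (Fin (m i)) ℂ) :=
    LinearEquiv.piCongrRight (fun i => LinearMap.toMatrix (bN i) (bN i))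
  have hmapNN : Submodule.map (ΨNN : (∀ i, N.M i →ₗ[ℂ] N.M i) →ₗ[ℂ] _)
      (HomRep N N) = LinearMap.ker (Φ₀ + T nm) := by
    ext y
    rw [Submodule.mem_map_equiv, hker]
    constructor
    · intro hmem a
      have hc := hmem a
      have := congrArg (LinearMap.toMatrix (bN (Q.s a)) (bN (Q.t a))) hc
      rw [LinearMap.toMatrix_comp _ (bN (Q.t a)) _, LinearMap.toMatrix_comp _ (bN (Q.s a)) _] at this
      have hy : ∀ i, LinearMap.toMatrix (bN i) (bN i) (ΨNN.symm y i) = y i := by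
        intro i
        have : ΨNN (ΨNN.symm y) = y := ΨNN.apply_symm_apply y
        exact congrFun this i
      rw [hy, hy] at this
      exact this.symm
    · intro hmem a
      have hc := hmem a
      have hy : ∀ i, LinearMap.toMatrix (bN i) (bN i) (ΨNN.symm y i) = y i := by
        intro i
        have : ΨNN (ΨNN.symm y) = y := ΨNN.apply_symm_apply y
        exact congrFun this i
      apply (LinearMap.toMatrix (bN (Q.s a)) (bN (Q.t a))).injective
      rw [LinearMap.toMatrix_comp _ (bN (Q.t a)) _, LinearMap.toMatrix_comp _ (bN (Q.s a)) _]
      rw [hy, hy]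
      exact hc.symm
  -- surjectivity of the commutator map at xm
  have hsurj : Function.Surjective (fun (φ : ∀ i, Matrix (Fin (m i)) (Fin (m i)) ℂ) =>
      (fun a => φ (Q.t a) * xm a - xm a * φ (Q.s a) :
        ∀ a, Matrix (Fin (m (Q.t a))) (Fin (m (Q.s a))) ℂ)) := by
    have hdel : Function.Surjective (deltaMap X X) := (extDim_eq_zero_iff X X).mp hX
    intro ξ
    let ξ' : ∀ a, X.M (Q.s a) →ₗ[ℂ] X.M (Q.t a) := fun a =>
      (Matrix.toLin (bX (Q.s a)) (bX (Q.t a))) (-ξ a)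
    obtain ⟨φ, hφ⟩ := hdel ξ'
    refine ⟨fun i => LinearMap.toMatrix (bX i) (bX i) (φ i), ?_⟩
    funext a
    have := congrFun hφ a
    have h2 := congrArg (LinearMap.toMatrix (bX (Q.s a)) (bX (Q.t a))) this
    simp only [deltaMap, LinearMap.coe_mk, AddHom.coe_mk] at h2
    rw [map_sub, LinearMap.toMatrix_comp _ (bX (Q.s a)) _, LinearMap.toMatrix_comp _ (bX (Q.t a)) _] at h2
    rw [LinearMap.toMatrix_toLin] at h2
    have : xm a * LinearMap.toMatrix (bX (Q.s a)) (bX (Q.s a)) (φ (Q.s a)) -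
        LinearMap.toMatrix (bX (Q.t a)) (bX (Q.t a)) (φ (Q.t a)) * xm a = -ξ a := h2
    have h3 : LinearMap.toMatrix (bX (Q.t a)) (bX (Q.t a)) (φ (Q.t a)) * xm a -
        xm a * LinearMap.toMatrix (bX (Q.s a)) (bX (Q.s a)) (φ (Q.s a)) = ξ a := by
      have := congrArg Neg.neg this
      simpa [neg_sub] using this
    exact h3
  -- apply the orbit lemma
  obtain ⟨W, hWnhds, hWorb⟩ := orbit_nhds Q.s Q.t m xm hsurj
  have hWc : ∀ v ∈ W, finrank ℂ (LinearMap.ker (Φ₀ + T v)) =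
      finrank ℂ (LinearMap.ker (Φ₀ + T xm)) := by
    intro v hv
    obtain ⟨g, hgu, hg⟩ := hWorb v hv
    let u : ∀ i, (Matrix (Fin (m i)) (Fin (m i)) ℂ)ˣ := fun i => (hgu i).unit
    have hu : ∀ i, (u i : Matrix (Fin (m i)) (Fin (m i)) ℂ) = g i := fun i => (hgu i).unit_spec
    let gi : ∀ i, Matrix (Fin (m i)) (Fin (m i)) ℂ := fun i =>
      (((u i)⁻¹ : (Matrix (Fin (m i)) (Fin (m i)) ℂ)ˣ) : Matrix (Fin (m i)) (Fin (m i)) ℂ)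
    have hgg : ∀ i, g i * gi i = 1 := by
      intro i
      rw [← hu i]
      exact Units.mul_inv (u i)
    have hgg' : ∀ i, gi i * g i = 1 := by
      intro i
      rw [← hu i]
      exact Units.inv_mul (u i)
    let eg : (∀ i, Matrix (Fin (m i)) (Fin (m i)) ℂ) ≃ₗ[ℂ]
        (∀ i, Matrix (Fin (m i)) (Fin (m i)) ℂ) :=
      LinearEquiv.piCongrRight (fun i =>
        LinearEquiv.ofLinear (LinearMap.mulLeft ℂ (g i)) (LinearMap.mulLeft ℂ (gi i))
          (by
            apply LinearMap.ext
            intro w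
            show g i * (gi i * w) = w
            rw [← Matrix.mul_assoc, hgg i, Matrix.one_mul])
          (by
            apply LinearMap.ext
            intro w
            show gi i * (g i * w) = w
            rw [← Matrix.mul_assoc, hgg' i, Matrix.one_mul]))
    have hrel : ∀ a, gi (Q.t a) * v a = xm a * gi (Q.s a) := by
      intro a
      calc gi (Q.t a) * v a
          = gi (Q.t a) * v a * (g (Q.s a) * gi (Q.s a)) := by
            rw [hgg (Q.s a), Matrix.mul_one]
        _ = gi (Q.t a) * (v a * g (Q.s a)) * gi (Q.s a) := by
            simp only [Matrix.mul_assoc]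
        _ = gi (Q.t a) * (g (Q.t a) * xm a) * gi (Q.s a) := by rw [hg a]
        _ = (gi (Q.t a) * g (Q.t a)) * xm a * gi (Q.s a) := by
            simp only [Matrix.mul_assoc]
        _ = xm a * gi (Q.s a) := by rw [hgg' (Q.t a), Matrix.one_mul]
    have hmap : Submodule.map (eg : ((∀ i, Matrix (Fin (m i)) (Fin (m i)) ℂ)) →ₗ[ℂ] _)
        (LinearMap.ker (Φ₀ + T xm)) = LinearMap.ker (Φ₀ + T v) := by
      ext y
      rw [Submodule.mem_map_equiv, hker, hker]
      have hsymm : ∀ i, (eg.symm y) i = gi i * y i := fun i => rfl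
      constructor
      · intro hy a
        have h1 := hy a
        rw [hsymm, hsymm] at h1
        -- h1 : xm a * (gi sa * y sa) = (gi ta * y ta) * nm a
        have h2 : g (Q.t a) * (xm a * (gi (Q.s a) * y (Q.s a))) = v a * y (Q.s a) := by
          calc g (Q.t a) * (xm a * (gi (Q.s a) * y (Q.s a)))
              = g (Q.t a) * ((xm a * gi (Q.s a)) * y (Q.s a)) := by
                simp only [Matrix.mul_assoc]
            _ = g (Q.t a) * ((gi (Q.t a) * v a) * y (Q.s a)) := by rw [← hrel a]
            _ = (g (Q.t a) * gi (Q.t a)) * (v a * y (Q.s a)) := by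
                simp only [Matrix.mul_assoc]
            _ = v a * y (Q.s a) := by rw [hgg (Q.t a), Matrix.one_mul]
        rw [← h2, h1]
        calc g (Q.t a) * ((gi (Q.t a) * y (Q.t a)) * nm a)
            = (g (Q.t a) * gi (Q.t a)) * (y (Q.t a) * nm a) := by
              simp only [Matrix.mul_assoc]
          _ = y (Q.t a) * nm a := by rw [hgg (Q.t a), Matrix.one_mul]
      · intro hy a
        rw [hsymm, hsymm]
        have h1 := hy a
        calc xm a * (gi (Q.s a) * y (Q.s a))
            = (xm a * gi (Q.s a)) * y (Q.s a) := by simp only [Matrix.mul_assoc]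
          _ = (gi (Q.t a) * v a) * y (Q.s a) := by rw [← hrel a]
          _ = gi (Q.t a) * (v a * y (Q.s a)) := by simp only [Matrix.mul_assoc]
          _ = gi (Q.t a) * (y (Q.t a) * nm a) := by rw [h1]
          _ = (gi (Q.t a) * y (Q.t a)) * nm a := by simp only [Matrix.mul_assoc]
    rw [← hmap]
    exact (LinearEquiv.finrank_map_eq eg (LinearMap.ker (Φ₀ + T xm)))
  -- semicontinuity
  have hsemi := semicont_ker T Φ₀ xm nm hWnhds
    (finrank ℂ (LinearMap.ker (Φ₀ + T xm))) hWc
  -- transport back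
  have h1 : finrank ℂ (HomRep N X) = finrank ℂ (LinearMap.ker (Φ₀ + T xm)) := by
    rw [← hmapNX]
    exact (LinearEquiv.finrank_map_eq ΨNX (HomRep N X)).symm
  have h2 : finrank ℂ (HomRep N N) = finrank ℂ (LinearMap.ker (Φ₀ + T nm)) := by
    rw [← hmapNN]
    exact (LinearEquiv.finrank_map_eq ΨNN (HomRep N N)).symm
  rw [h1, h2]
  exact hsemi
end Part5

/-- Let `Q` be a Dynkin quiver (encoded by positive definiteness of the Euler form),
`X` and `Y` exceptional representations with `Ext¹(X,Y) = 0`, `M = X ⊕ Y`,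
`e = dim X`, `d = dim (X ⊕ Y)`.  If `N` is any representation of dimension vector `e`
that embeds into `M`, then `Ext¹(N,Y) = 0`,
`dim Hom(N,Y) = ⟨e, d−e⟩ = dim Hom(X,Y)`, and consequently
`dim S_{[N]} = dim Hom(N, M) − dim End(N)
             = dim Hom(N,X) − dim End(N) + dim Hom(X,Y) ≤ dim Hom(X,Y)`. -/
theorem stratum_dimension_estimate (Q : QuiverData) [Fintype Q.V] [Fintype Q.A]
    (dynkin : ∀ d : Q.V → ℤ, d ≠ 0 → 0 < eulerQ Q d d)
    (X Y N : QRep Q)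
    [∀ i, FiniteDimensional ℂ (X.M i)] [∀ i, FiniteDimensional ℂ (Y.M i)]
    [∀ i, FiniteDimensional ℂ (N.M i)]
    (hX : extDim X X = 0) (hY : extDim Y Y = 0) (hXY : extDim X Y = 0)
    (hdim : ∀ i, Module.finrank ℂ (N.M i) = Module.finrank ℂ (X.M i))
    (hemb : ∃ ι : HomRep N (dsumQ X Y), ∀ i, Function.Injective (ι.1 i)) :
    extDim N Y = 0 ∧
    (Module.finrank ℂ (HomRep N Y) : ℤ) =
      eulerQ Q (fun i => (Module.finrank ℂ (X.M i) : ℤ))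
        (fun i => (Module.finrank ℂ (Y.M i) : ℤ)) ∧
    Module.finrank ℂ (HomRep N Y) = Module.finrank ℂ (HomRep X Y) ∧
    (Module.finrank ℂ (HomRep N (dsumQ X Y)) : ℤ) - Module.finrank ℂ (HomRep N N) =
      (Module.finrank ℂ (HomRep N X) : ℤ) - Module.finrank ℂ (HomRep N N) +
        Module.finrank ℂ (HomRep X Y) ∧
    (Module.finrank ℂ (HomRep N X) : ℤ) - Module.finrank ℂ (HomRep N N) +
        Module.finrank ℂ (HomRep X Y) ≤ Module.finrank ℂ (HomRep X Y) := by
  classical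
  have hNY : extDim N Y = 0 := by
    rw [extDim_eq_zero_iff]
    obtain ⟨ι, hι⟩ := hemb
    apply delta_sub_surj N (dsumQ X Y) Y ι hι
    apply delta_dsum_surj
    · exact (extDim_eq_zero_iff X Y).mp hXY
    · exact (extDim_eq_zero_iff Y Y).mp hY
  have eNY : (Module.finrank ℂ (HomRep N Y) : ℤ) =
      eulerQ Q (fun i => (Module.finrank ℂ (X.M i) : ℤ))
        (fun i => (Module.finrank ℂ (Y.M i) : ℤ)) := by
    have h := euler_eq N Y
    rw [hNY] at h
    have hfun : (fun i => (Module.finrank ℂ (N.M i) : ℤ)) =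
        (fun i => (Module.finrank ℂ (X.M i) : ℤ)) := funext fun i => by rw [hdim i]
    rw [hfun] at h
    simpa using h
  have eXY : (Module.finrank ℂ (HomRep X Y) : ℤ) =
      eulerQ Q (fun i => (Module.finrank ℂ (X.M i) : ℤ))
        (fun i => (Module.finrank ℂ (Y.M i) : ℤ)) := by
    have h := euler_eq X Y
    rw [hXY] at h
    simpa using h
  have hNYXY : Module.finrank ℂ (HomRep N Y) = Module.finrank ℂ (HomRep X Y) := by
    have : (Module.finrank ℂ (HomRep N Y) : ℤ) = (Module.finrank ℂ (HomRep X Y) : ℤ) := by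
      rw [eNY, eXY]
    exact_mod_cast this
  have hds := finrank_homRep_dsum N X Y
  have hle : Module.finrank ℂ (HomRep N X) ≤ Module.finrank ℂ (HomRep N N) :=
    homNX_le_endN X N hX hdim
  refine ⟨hNY, eNY, hNYXY, ?_, ?_⟩
  · rw [hds, hNYXY]
    push_cast
    ring
  · have := hle
    zify at this
    linarith
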